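/- Let A be a Banach algebra, f ∈ A*, a ∈ A. If T_f is completely continuous and L_a : x ↦ ax is weakly precompact, then T_{fa} is a compact operator (i.e., fa is an almost periodic functional). -/

import Mathlib

open Filter Topology ENNReal

/-- A sequence is weakly null if `f (x n) → 0` for every continuous linear functional `f`. -/
def WeaklyNull {A : Type*} [NormedAddCommGroup A] [NormedSpace ℝ A] (x : ℕ → A) : Prop :=
  ∀ f : A →L[ℝ] ℝ, Tendsto (fun n => f (x n)) atTop (𝓝 0)

/-- A sequence is weakly Cauchy if `f (x n)` converges for every continuous linear functional. -/
def WeaklyCauchy {A : Type*} [NormedAddCommGroup A] [NormedSpace ℝ A] (x : ℕ → A) : Prop :=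
  ∀ f : A →L[ℝ] ℝ, ∃ L : ℝ, Tendsto (fun n => f (x n)) atTop (𝓝 L)

/-- `E ⊆ A*` is an L-set: `sup_{f ∈ E} |f (x n)| → 0` for every weakly null `x`. -/
def LSet {A : Type*} [NormedAddCommGroup A] [NormedSpace ℝ A] (E : Set (A →L[ℝ] ℝ)) : Prop :=
  ∀ x : ℕ → A, WeaklyNull x → ∀ ε > (0 : ℝ), ∃ N : ℕ, ∀ n ≥ N, ∀ f ∈ E, |f (x n)| < ε

/-- A set is weakly precompact if every sequence in it has a weakly Cauchy subsequence. -/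
def WeaklyPrecompact {A : Type*} [NormedAddCommGroup A] [NormedSpace ℝ A] (K : Set A) : Prop :=
  ∀ x : ℕ → A, (∀ n, x n ∈ K) → ∃ φ : ℕ → ℕ, StrictMono φ ∧ WeaklyCauchy (x ∘ φ)

/-- A map is completely continuous if it sends weakly null sequences to norm null sequences. -/
def CompletelyContinuous {A B : Type*} [NormedAddCommGroup A] [NormedSpace ℝ A]
    [NormedAddCommGroup B] (T : A → B) : Prop :=
  ∀ x : ℕ → A, WeaklyNull x → Tendsto (fun n => ‖T (x n)‖) atTop (𝓝 0)

/-- The multiplication operator `T_f : A → A*`, `(T_f a) x = f (a * x)`. -/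
noncomputable def Tf {A : Type*} [NormedRing A] [NormedAlgebra ℝ A]
    (f : A →L[ℝ] ℝ) (a : A) : A →L[ℝ] ℝ :=
  f.comp (ContinuousLinearMap.mul ℝ A a)

/-- The multiplication operator `S_f : A → A*`, `(S_f a) x = f (x * a)`. -/
noncomputable def Sf {A : Type*} [NormedRing A] [NormedAlgebra ℝ A]
    (f : A →L[ℝ] ℝ) (a : A) : A →L[ℝ] ℝ :=
  f.comp ((ContinuousLinearMap.mul ℝ A).flip a)

/-- `w` is an ℓ¹-sequence: equivalent to the unit vector basis of ℓ¹. -/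
def IsL1Sequence {A : Type*} [NormedAddCommGroup A] [NormedSpace ℝ A] (w : ℕ → A) : Prop :=
  ∃ c C : ℝ, 0 < c ∧ ∀ (s : Finset ℕ) (lam : ℕ → ℝ),
    c * ∑ n ∈ s, |lam n| ≤ ‖∑ n ∈ s, lam n • w n‖ ∧
      ‖∑ n ∈ s, lam n • w n‖ ≤ C * ∑ n ∈ s, |lam n|

/-- The Schur property: weakly convergent sequences are norm convergent. -/
def SchurProperty (A : Type*) [NormedAddCommGroup A] [NormedSpace ℝ A] : Prop :=
  ∀ (x : ℕ → A) (L : A),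
    (∀ f : A →L[ℝ] ℝ, Tendsto (fun n => f (x n)) atTop (𝓝 (f L))) →
      Tendsto x atTop (𝓝 L)


lemma Tf_sub {A : Type*} [NormedRing A] [NormedAlgebra ℝ A] (f : A →L[ℝ] ℝ) (u v : A) :
    Tf f (u - v) = Tf f u - Tf f v := by
  ext z; simp [Tf, sub_mul]

lemma cauchy_of_cc {A : Type*} [NormedRing A] [NormedAlgebra ℝ A]
    (f : A →L[ℝ] ℝ) (hf : CompletelyContinuous (Tf f)) (y : ℕ → A)
    (hy : WeaklyCauchy y) : CauchySeq (fun k => Tf f (y k)) := by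
  rw [Metric.cauchySeq_iff]
  by_contra h
  push_neg at h
  obtain ⟨ε, hε, h⟩ := h
  choose m hm n hn hd using h
  have hz : WeaklyNull (fun i => y (m i) - y (n i)) := by
    intro g
    obtain ⟨L, hL⟩ := hy g
    have hmt : Tendsto m atTop atTop := tendsto_atTop_mono hm tendsto_id
    have hnt : Tendsto n atTop atTop := tendsto_atTop_mono hn tendsto_id
    have := (hL.comp hmt).sub (hL.comp hnt)
    simpa using this
  have := hf _ hz
  have hev : ∀ᶠ i in atTop, ‖Tf f (y (m i) - y (n i))‖ < ε :=
    (this.eventually (eventually_lt_nhds hε)).mono fun i hi => hi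
  obtain ⟨i, hi⟩ := hev.exists
  rw [Tf_sub] at hi
  have hge : ε ≤ ‖Tf f (y (m i)) - Tf f (y (n i))‖ := by
    rw [← dist_eq_norm]; exact hd i
  linarith

theorem tf_fa_compact {A : Type*} [NormedRing A] [NormedAlgebra ℝ A] [CompleteSpace A]
    (f : A →L[ℝ] ℝ) (a : A)
    (hf : CompletelyContinuous (Tf f))
    (hLa : ∀ x : ℕ → A, (∃ C : ℝ, ∀ n, ‖x n‖ ≤ C) →
      ∃ φ : ℕ → ℕ, StrictMono φ ∧ WeaklyCauchy (fun k => a * x (φ k))) :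
    IsCompactOperator (fun b => Tf f (a * b)) := by
  set T : A → (A →L[ℝ] ℝ) := fun b => Tf f (a * b) with hT
  set S : Set (A →L[ℝ] ℝ) := T '' Metric.closedBall 0 1 with hS
  refine ⟨closure S, ?_, ?_⟩
  · -- compactness of closure S via sequential compactness
    refine IsSeqCompact.isCompact ?_
    intro g hg
    have happrox : ∀ k : ℕ, ∃ b : A, ‖b‖ ≤ 1 ∧ dist (g k) (T b) < 1 / (k + 1) := by
      intro k
      have h1 : (0 : ℝ) < 1 / (k + 1) := by positivity
      obtain ⟨y, hyS, hdy⟩ := Metric.mem_closure_iff.mp (hg k) _ h1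
      obtain ⟨b, hb, rfl⟩ := hyS
      exact ⟨b, by simpa [Metric.mem_closedBall, dist_zero_right] using hb, hdy⟩
    choose b hb1 hb2 using happrox
    obtain ⟨φ, hφ, hwc⟩ := hLa b ⟨1, hb1⟩
    have hc : CauchySeq (fun k => T (b (φ k))) := by
      have := cauchy_of_cc f hf (fun k => a * b (φ k)) hwc
      simpa [hT] using this
    obtain ⟨L, hL⟩ := cauchySeq_tendsto_of_complete hc
    have hLmem : L ∈ closure S := by
      refine mem_closure_of_tendsto hL ?_
      filter_upwards with k
      exact ⟨b (φ k), by simpa [Metric.mem_closedBall, dist_zero_right] using hb1 (φ k), rfl⟩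
    refine ⟨L, hLmem, φ, hφ, ?_⟩
    have hdist : Tendsto (fun k => dist (g (φ k)) (T (b (φ k)))) atTop (𝓝 0) := by
      have hb' : ∀ k, dist (g (φ k)) (T (b (φ k))) ≤ 1 / (k + 1) := by
        intro k
        refine le_trans (le_of_lt (hb2 (φ k))) ?_
        have : (k : ℝ) + 1 ≤ (φ k : ℝ) + 1 := by
          have h := hφ.le_apply (x := k); exact by exact_mod_cast Nat.add_le_add_right h 1
        exact one_div_le_one_div_of_le (by positivity) this
      refine squeeze_zero (fun k => dist_nonneg) hb' tendsto_one_div_add_atTop_nhds_zero_nat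
    have : Tendsto (fun k => dist (g (φ k)) L) atTop (𝓝 0) := by
      refine squeeze_zero (fun k => dist_nonneg) (fun k => dist_triangle (g (φ k)) (T (b (φ k))) L) ?_
      have := hdist.add (tendsto_iff_dist_tendsto_zero.mp hL)
      simpa using this
    exact tendsto_iff_dist_tendsto_zero.mpr this
  · -- preimage is a neighborhood of 0
    refine mem_of_superset (Metric.closedBall_mem_nhds 0 one_pos) ?_
    intro b hb
    exact subset_closure ⟨b, hb, rfl⟩
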